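/- arXiv:2005.09676 — 3 statements merged into one kernel-verified Lean document; each statement's English description precedes it below -/
import Mathlib

section
/- Let a, r ∈ ℝ with 0 ≤ r and 3r < a, and let S ⊆ ℝ be the union of the closed balls of radius r centered at a and at −a. Let f, g : ℝ → ℂ be Schwartz functions whose Fourier transforms 𝓕f and 𝓕g (with 𝓕h(k) = ∫_ℝ h(x) e^{−ikx} dx) vanish at every k ∉ S. Then the Fourier transform of the pointwise product f·g vanishes at every k ∈ S. -/
open MeasureTheory FourierTransform Real

lemma conv_aux (h : SchwartzMap ℝ ℂ) (k : ℝ) :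
    (∫ x : ℝ, h x * Complex.exp (-(Complex.I * (k : ℂ) * (x : ℂ)))) = 𝓕 ⇑h (k / (2 * π)) := by
  rw [Real.fourier_eq']
  congr 1
  ext v
  rw [smul_eq_mul, mul_comm]
  congr 1
  simp only [RCLike.inner_apply, starRingEnd_apply, star_trivial]
  congr 1
  have hπ : (π:ℝ) ≠ 0 := Real.pi_ne_zero
  have hπc : (π:ℂ) ≠ 0 := by exact_mod_cast hπ
  push_cast
  field_simp

lemma disj_aux (a r k s : ℝ) (hr : 0 ≤ r) (har : 3 * r < a)
    (hk : k ∈ Metric.closedBall a r ∪ Metric.closedBall (-a) r)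
    (hs : s ∈ Metric.closedBall a r ∪ Metric.closedBall (-a) r) :
    k - s ∉ Metric.closedBall a r ∪ Metric.closedBall (-a) r := by
  simp only [Metric.mem_closedBall, Set.mem_union, Real.dist_eq] at *
  push_neg
  rcases hk with hk | hk <;> rcases hs with hs | hs <;> rw [abs_le] at hk hs <;>
    constructor <;> rw [lt_abs] <;> first | (left; linarith) | (right; linarith)

theorem stmt8 (a r : ℝ) (hr : 0 ≤ r) (har : 3 * r < a)
    (S : Set ℝ) (hS : S = Metric.closedBall a r ∪ Metric.closedBall (-a) r)
    (f g : SchwartzMap ℝ ℂ)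
    (hf : ∀ k : ℝ, k ∉ S →
      (∫ x : ℝ, f x * Complex.exp (-(Complex.I * (k : ℂ) * (x : ℂ)))) = 0)
    (hg : ∀ k : ℝ, k ∉ S →
      (∫ x : ℝ, g x * Complex.exp (-(Complex.I * (k : ℂ) * (x : ℂ)))) = 0) :
    ∀ k ∈ S,
      (∫ x : ℝ, f x * g x * Complex.exp (-(Complex.I * (k : ℂ) * (x : ℂ)))) = 0 := by
  intro k hk
  set F : SchwartzMap ℝ ℂ := SchwartzMap.fourierTransformCLM ℂ f with hFdef
  have hF : ⇑F = 𝓕 ⇑f := rfl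
  have hπ : (π:ℝ) ≠ 0 := Real.pi_ne_zero
  -- F vanishes off (1/2π) S
  have hFzero : ∀ ξ : ℝ, 2 * π * ξ ∉ S → F ξ = 0 := by
    intro ξ hξ
    have h1 := conv_aux f (2 * π * ξ)
    rw [hf _ hξ] at h1
    have h2 : 2 * π * ξ / (2 * π) = ξ := by field_simp
    rw [h2] at h1
    rw [hF]
    exact h1.symm
  -- inversion
  have hinv : ∀ x : ℝ, f x = ∫ ξ : ℝ, Complex.exp ((2 * π * (ξ * x) : ℝ) * Complex.I) * F ξ := by
    intro x
    have h := f.continuous.fourierInv_fourier_eq f.integrable (hF ▸ F.integrable)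
    rw [← congrFun h x, Real.fourierInv_eq']
    simp [hF, RCLike.inner_apply, smul_eq_mul]
    simp only [mul_comm (x : ℂ)]
  -- the two-variable function
  set H : ℝ → ℝ → ℂ := fun x ξ => F ξ * g x *
    Complex.exp ((-((k - 2 * π * ξ) * x) : ℝ) * Complex.I) with hHdef
  have hHint : Integrable (Function.uncurry H) (volume.prod volume) := by
    have hbd : Integrable (fun p : ℝ × ℝ => ‖g p.1‖ * ‖F p.2‖)
        (volume.prod volume) := g.integrable.norm.mul_prod F.integrable.norm
    refine hbd.mono' ?_ ?_
    · apply Continuous.aestronglyMeasurable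
      fun_prop
    · filter_upwards with p
      simp only [Function.uncurry, hHdef, norm_mul, Complex.norm_exp_ofReal_mul_I, mul_one]
      rw [mul_comm ‖F p.2‖]
  -- pointwise expansion in x
  have hexp : ∀ x : ℝ, f x * g x * Complex.exp (-(Complex.I * (k : ℂ) * (x : ℂ)))
      = ∫ ξ : ℝ, H x ξ := by
    intro x
    rw [hinv x, ← integral_mul_const, ← integral_mul_const]
    congr 1
    ext ξ
    simp only [hHdef]
    rw [show Complex.exp ((2 * π * (ξ * x) : ℝ) * Complex.I) * F ξ * g x *
        Complex.exp (-(Complex.I * (k : ℂ) * (x : ℂ)))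
      = F ξ * g x * (Complex.exp ((2 * π * (ξ * x) : ℝ) * Complex.I) *
        Complex.exp (-(Complex.I * (k : ℂ) * (x : ℂ)))) by ring, ← Complex.exp_add]
    congr 2
    push_cast
    ring
  -- inner integrals vanish
  have hzero : ∀ ξ : ℝ, (∫ x : ℝ, H x ξ) = 0 := by
    intro ξ
    by_cases hξ : 2 * π * ξ ∈ S
    · have hks : (k - 2 * π * ξ) ∉ S := by
        rw [hS] at *
        exact disj_aux a r k (2 * π * ξ) hr har hk hξ
      have h2 : (∫ x : ℝ, H x ξ)
          = (∫ x : ℝ, g x * Complex.exp (-(Complex.I * ((k - 2 * π * ξ : ℝ) : ℂ) * (x : ℂ)))) * F ξ := by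
        rw [← integral_mul_const]
        congr 1
        ext x
        simp only [hHdef]
        have harg : ((-((k - 2 * π * ξ) * x) : ℝ) : ℂ) * Complex.I
            = -(Complex.I * ((k - 2 * π * ξ : ℝ) : ℂ) * (x : ℂ)) := by push_cast; ring
        rw [harg]; ring
      rw [h2, hg _ hks, zero_mul]
    · simp only [hHdef, hFzero ξ hξ, zero_mul]
      simp
  calc (∫ x : ℝ, f x * g x * Complex.exp (-(Complex.I * (k : ℂ) * (x : ℂ))))
      = ∫ x : ℝ, ∫ ξ : ℝ, H x ξ := by exact integral_congr_ae (Filter.Eventually.of_forall hexp)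
    _ = ∫ ξ : ℝ, ∫ x : ℝ, H x ξ := integral_integral_swap hHint
    _ = 0 := by simp [hzero]
end

section
/- Let ε ∈ (0,1], M ≥ 0, and let A : ℝ → ℂ be four times continuously differentiable with |A'''(X)| ≤ M and |A''''(X)| ≤ M for all X ∈ ℝ. Set v(X) := 2 Re( A(X) e^{iX/ε} ). Then v is four times continuously differentiable and for every X ∈ ℝ, | −ε⁻²( v(X) + 2ε² v''(X) + ε⁴ v''''(X) ) − 2 Re( 4A''(X) e^{iX/ε} ) | ≤ 8εM + 2ε²M. -/
open Complex

theorem stmt10 (ε M : ℝ) (hε : 0 < ε) (hε1 : ε ≤ 1) (hM : 0 ≤ M)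
    (A : ℝ → ℂ) (hA : ContDiff ℝ 4 A)
    (hA3 : ∀ X : ℝ, ‖iteratedDeriv 3 A X‖ ≤ M)
    (hA4 : ∀ X : ℝ, ‖iteratedDeriv 4 A X‖ ≤ M)
    (v : ℝ → ℝ)
    (hv : v = fun X : ℝ => 2 * (A X * Complex.exp (Complex.I * (X : ℂ) / (ε : ℂ))).re) :
    ContDiff ℝ 4 v ∧
    ∀ X : ℝ,
      |(-(ε ^ 2)⁻¹ * (v X + 2 * ε ^ 2 * iteratedDeriv 2 v X + ε ^ 4 * iteratedDeriv 4 v X))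
          - 2 * (4 * iteratedDeriv 2 A X * Complex.exp (Complex.I * (X : ℂ) / (ε : ℂ))).re| ≤
        8 * ε * M + 2 * ε ^ 2 * M := by
  have hεc : (ε : ℂ) ≠ 0 := by exact_mod_cast hε.ne'
  set c : ℂ := Complex.I / ε with hc
  set E : ℝ → ℂ := fun X => Complex.exp (c * X) with hEdef
  have hEeq : ∀ X : ℝ, Complex.exp (Complex.I * (X : ℂ) / ε) = E X := by
    intro X; simp only [hEdef, hc]; ring_nf
  have hE : ∀ X : ℝ, HasDerivAt E (c * E X) X := by
    intro X
    have h0 : HasDerivAt (fun X : ℝ => (X : ℂ)) 1 X := by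
      simpa using (hasDerivAt_id X).ofReal_comp
    have h1 : HasDerivAt (fun X : ℝ => c * (X : ℂ)) c X := by
      simpa using h0.const_mul c
    have h2 := h1.cexp
    convert h2 using 1
    ring
  have hEabs : ∀ X : ℝ, ‖E X‖ = 1 := by
    intro X
    have : c * (X : ℂ) = ((X / ε : ℝ) : ℂ) * Complex.I := by
      simp only [hc]; push_cast; field_simp
    rw [hEdef]; simp only [this]
    exact Complex.norm_exp_ofReal_mul_I _
  -- derivative facts for A
  have hd : ∀ k : ℕ, k < 4 → ∀ X : ℝ,
      HasDerivAt (iteratedDeriv k A) (iteratedDeriv (k + 1) A X) X := by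
    intro k hk X
    have hdk : DifferentiableAt ℝ (iteratedDeriv k A) X :=
      (hA.differentiable_iteratedDeriv k (by exact_mod_cast hk)).differentiableAt
    have := hdk.hasDerivAt
    rwa [show deriv (iteratedDeriv k A) X = iteratedDeriv (k + 1) A X from by
      rw [iteratedDeriv_succ]] at this
  set A0 : ℝ → ℂ := A with hA0
  set A1 := iteratedDeriv 1 A with hA1
  set A2 := iteratedDeriv 2 A with hA2
  set A3 := iteratedDeriv 3 A with hA3'
  set A4 := iteratedDeriv 4 A with hA4'
  have hd0 : ∀ X, HasDerivAt A0 (A1 X) X := by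
    intro X; have h := hd 0 (by norm_num) X
    simp only [iteratedDeriv_zero] at h; exact h
  have hd1 : ∀ X, HasDerivAt A1 (A2 X) X := hd 1 (by norm_num)
  have hd2 : ∀ X, HasDerivAt A2 (A3 X) X := hd 2 (by norm_num)
  have hd3 : ∀ X, HasDerivAt A3 (A4 X) X := hd 3 (by norm_num)
  -- coefficient functions
  set w0 : ℝ → ℂ := fun X => A0 X with hw0
  set w1 : ℝ → ℂ := fun X => A1 X + c * A0 X with hw1
  set w2 : ℝ → ℂ := fun X => A2 X + 2 * c * A1 X + c ^ 2 * A0 X with hw2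
  set w3 : ℝ → ℂ := fun X => A3 X + 3 * c * A2 X + 3 * c ^ 2 * A1 X + c ^ 3 * A0 X with hw3
  set w4 : ℝ → ℂ := fun X =>
    A4 X + 4 * c * A3 X + 6 * c ^ 2 * A2 X + 4 * c ^ 3 * A1 X + c ^ 4 * A0 X with hw4
  -- step lemma
  have step : ∀ (f f' : ℝ → ℂ), (∀ X, HasDerivAt f (f' X) X) →
      ∀ X, HasDerivAt (fun X => f X * E X) ((f' X + c * f X) * E X) X := by
    intro f f' hf X
    have := (hf X).fun_mul (hE X)
    exact this.congr_deriv (by ring)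
  have hg0 : ∀ X, HasDerivAt (fun X => w0 X * E X) (w1 X * E X) X := by
    intro X
    have := step w0 (fun X => A1 X) hd0 X
    convert this using 2
  have hg1 : ∀ X, HasDerivAt (fun X => w1 X * E X) (w2 X * E X) X := by
    intro X
    have hder : ∀ X, HasDerivAt w1 (A2 X + c * A1 X) X := by
      intro X; exact (hd1 X).add ((hd0 X).const_mul c)
    have := step w1 (fun X => A2 X + c * A1 X) hder X
    convert this using 2
    simp only [hw1, hw2]; ring
  have hg2 : ∀ X, HasDerivAt (fun X => w2 X * E X) (w3 X * E X) X := by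
    intro X
    have hder : ∀ X, HasDerivAt w2 (A3 X + 2 * c * A2 X + c ^ 2 * A1 X) X := by
      intro X; exact ((hd2 X).add ((hd1 X).const_mul (2 * c))).add ((hd0 X).const_mul (c ^ 2))
    have := step w2 (fun X => A3 X + 2 * c * A2 X + c ^ 2 * A1 X) hder X
    convert this using 2
    simp only [hw2, hw3]; ring
  have hg3 : ∀ X, HasDerivAt (fun X => w3 X * E X) (w4 X * E X) X := by
    intro X
    have hder : ∀ X, HasDerivAt w3
        (A4 X + 3 * c * A3 X + 3 * c ^ 2 * A2 X + c ^ 3 * A1 X) X := by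
      intro X
      exact (((hd3 X).add ((hd2 X).const_mul (3 * c))).add
        ((hd1 X).const_mul (3 * c ^ 2))).add ((hd0 X).const_mul (c ^ 3))
    have := step w3 (fun X => A4 X + 3 * c * A3 X + 3 * c ^ 2 * A2 X + c ^ 3 * A1 X) hder X
    convert this using 2
    simp only [hw3, hw4]; ring
  -- real versions
  have re_step : ∀ (g g' : ℝ → ℂ), (∀ X, HasDerivAt g (g' X) X) →
      ∀ X, HasDerivAt (fun X => 2 * (g X).re) (2 * (g' X).re) X := by
    intro g g' hg X
    have := (Complex.reCLM.hasFDerivAt.comp_hasDerivAt X (hg X)).const_mul (2 : ℝ)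
    simpa using this
  have hv0 : v = fun X => 2 * (w0 X * E X).re := by
    rw [hv]; funext X; rw [hEeq]
  -- chain of iterated derivatives
  have hder1 : deriv v = fun X => 2 * (w1 X * E X).re := by
    funext X
    exact (by rw [hv0]; exact re_step _ _ hg0 X : HasDerivAt v (2 * (w1 X * E X).re) X).deriv
  have hder2 : iteratedDeriv 2 v = fun X => 2 * (w2 X * E X).re := by
    rw [iteratedDeriv_succ, iteratedDeriv_one, hder1]
    funext X
    exact (re_step _ _ hg1 X).deriv
  have hder3 : iteratedDeriv 3 v = fun X => 2 * (w3 X * E X).re := by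
    rw [iteratedDeriv_succ, hder2]
    funext X
    exact (re_step _ _ hg2 X).deriv
  have hder4 : iteratedDeriv 4 v = fun X => 2 * (w4 X * E X).re := by
    rw [iteratedDeriv_succ, hder3]
    funext X
    exact (re_step _ _ hg3 X).deriv
  constructor
  · rw [hv0]
    have hEcd : ContDiff ℝ 4 E :=
      (contDiff_const.mul Complex.ofRealCLM.contDiff).cexp
    exact contDiff_const.mul (Complex.reCLM.contDiff.comp (hA.mul hEcd))
  · intro X
    rw [hder2, hder4, hv0, hEeq]
    -- key complex identity
    have key0 : w0 X + 2 * (ε : ℂ) ^ 2 * w2 X + (ε : ℂ) ^ 4 * w4 X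
        = -(ε : ℂ) ^ 2 * (4 * A2 X - 4 * Complex.I * ε * A3 X - (ε : ℂ) ^ 2 * A4 X) := by
      have h2 : Complex.I ^ 2 = -1 := Complex.I_sq
      have hεp : ∀ n : ℕ, ((ε : ℂ)) ^ n ≠ 0 := fun n => pow_ne_zero n hεc
      have e1 : c * (ε : ℂ) = Complex.I := by
        rw [hc]; exact div_mul_cancel₀ _ hεc
      have e2 : c ^ 2 * (ε : ℂ) ^ 2 = -1 := by
        rw [hc, div_pow, h2, div_mul_cancel₀ _ (hεp 2)]
      have e4 : c ^ 4 * (ε : ℂ) ^ 4 = 1 := by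
        rw [hc, div_pow, show (4:ℕ) = 2*2 from rfl, pow_mul, h2,
          div_mul_cancel₀ _ (hεp 4)]; norm_num
      simp only [hw0, hw2, hw4]
      linear_combination (2 * A0 X + 4 * (ε : ℂ) ^ 2 * c * A1 X + 6 * (ε : ℂ) ^ 2 * A2 X) * e2
        + A0 X * e4 + 4 * (ε : ℂ) ^ 3 * A3 X * e1
    have key : (-((ε : ℂ) ^ 2)⁻¹) * (w0 X + 2 * (ε : ℂ) ^ 2 * w2 X + (ε : ℂ) ^ 4 * w4 X)
        = 4 * A2 X - 4 * Complex.I * ε * A3 X - (ε : ℂ) ^ 2 * A4 X := by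
      rw [key0]
      have hε2 : ((ε : ℂ)) ^ 2 ≠ 0 := pow_ne_zero _ hεc
      field_simp
    have lhs_eq :
        -(ε ^ 2)⁻¹ * (2 * (w0 X * E X).re + 2 * ε ^ 2 * (2 * (w2 X * E X).re)
            + ε ^ 4 * (2 * (w4 X * E X).re)) - 2 * (4 * A2 X * E X).re
        = 2 * ((-4 * Complex.I * ε * A3 X - (ε : ℂ) ^ 2 * A4 X) * E X).re := by
      simp only [← Complex.re_ofReal_mul, ← Complex.add_re, ← Complex.sub_re]
      congr 1
      push_cast
      linear_combination (2 : ℂ) * (E X) * key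
    rw [lhs_eq]
    -- bound
    have habs : ‖(-4 * Complex.I * ε * A3 X - (ε : ℂ) ^ 2 * A4 X) * E X‖
        ≤ 4 * ε * M + ε ^ 2 * M := by
      rw [norm_mul, hEabs, mul_one]
      have e1 : ‖-4 * Complex.I * ε * A3 X‖ = 4 * ε * ‖A3 X‖ := by
        rw [show (-4 * Complex.I * ε * A3 X) = ((4 * ε : ℝ) : ℂ) * (-(Complex.I * A3 X)) by
          push_cast; ring, norm_mul, Complex.norm_real, Real.norm_eq_abs, norm_neg, norm_mul, Complex.norm_I,
          one_mul, abs_of_pos (by positivity)]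
      have e2 : ‖(ε : ℂ) ^ 2 * A4 X‖ = ε ^ 2 * ‖A4 X‖ := by
        rw [show ((ε : ℂ) ^ 2 * A4 X) = ((ε ^ 2 : ℝ) : ℂ) * A4 X by push_cast; ring,
          norm_mul, Complex.norm_real, Real.norm_eq_abs, abs_of_pos (by positivity)]
      calc ‖-4 * Complex.I * ε * A3 X - (ε : ℂ) ^ 2 * A4 X‖
          ≤ ‖-4 * Complex.I * ε * A3 X‖ + ‖(ε : ℂ) ^ 2 * A4 X‖ :=
            norm_sub_le _ _
        _ ≤ 4 * ε * M + ε ^ 2 * M := by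
            rw [e1, e2]
            have h3 := hA3 X
            have h4 := hA4 X
            have hε2 : (0:ℝ) ≤ ε ^ 2 := sq_nonneg ε
            nlinarith [norm_nonneg (A3 X), norm_nonneg (A4 X)]
    calc |2 * ((-4 * Complex.I * ε * A3 X - (ε : ℂ) ^ 2 * A4 X) * E X).re|
        ≤ 2 * ‖(-4 * Complex.I * ε * A3 X - (ε : ℂ) ^ 2 * A4 X) * E X‖ := by
          rw [abs_mul, _root_.abs_two]
          exact mul_le_mul_of_nonneg_left (Complex.abs_re_le_norm _) (by norm_num)
      _ ≤ 2 * (4 * ε * M + ε ^ 2 * M) := by linarith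
      _ = 8 * ε * M + 2 * ε ^ 2 * M := by ring
end

section
/- Let ε > 0, T ≥ 0, and k ∈ ℝ with |εk − 1| ≤ 1, and set ℓ := k − 1/ε. Then | exp( −T ε⁻² (1 − ε²k²)² ) − exp( −4Tℓ² ) | ≤ 5 ε T |ℓ|³ exp( −Tℓ² ). -/
lemma exp_diff_le_aux (a b c : ℝ) (hca : c ≤ a) (hab : a ≤ b) :
    |Real.exp (-a) - Real.exp (-b)| ≤ |a - b| * Real.exp (-c) := by
  have h1 : Real.exp (-b) ≤ Real.exp (-a) := Real.exp_le_exp.mpr (by linarith)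
  rw [abs_of_nonneg (by linarith), abs_of_nonpos (by linarith)]
  have h2 : Real.exp (-a) - Real.exp (-b) = Real.exp (-a) * (1 - Real.exp (-(b - a))) := by
    rw [mul_sub, ← Real.exp_add]; ring_nf
  rw [h2]
  have h3 : 1 - Real.exp (-(b - a)) ≤ b - a := by
    nlinarith [Real.add_one_le_exp (-(b - a))]
  have h4 : Real.exp (-a) ≤ Real.exp (-c) := Real.exp_le_exp.mpr (by linarith)
  have h5 : 0 ≤ 1 - Real.exp (-(b - a)) := by
    nlinarith [Real.exp_le_one_iff.mpr (show -(b-a) ≤ 0 by linarith)]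
  nlinarith [Real.exp_pos (-c), Real.exp_pos (-a)]

lemma exp_diff_le (a b c : ℝ) (hca : c ≤ a) (hcb : c ≤ b) :
    |Real.exp (-a) - Real.exp (-b)| ≤ |a - b| * Real.exp (-c) := by
  rcases le_total a b with h | h
  · exact exp_diff_le_aux a b c hca h
  · rw [abs_sub_comm, abs_sub_comm a b]
    exact exp_diff_le_aux b a c hcb h

theorem stmt11 (ε T k : ℝ) (hε : 0 < ε) (hT : 0 ≤ T) (hk : |ε * k - 1| ≤ 1)
    (ℓ : ℝ) (hℓ : ℓ = k - 1 / ε) :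
    |Real.exp (-(T * (ε ^ 2)⁻¹ * (1 - ε ^ 2 * k ^ 2) ^ 2)) - Real.exp (-(4 * T * ℓ ^ 2))| ≤
      5 * ε * T * |ℓ| ^ 3 * Real.exp (-(T * ℓ ^ 2)) := by
  have hε0 : ε ≠ 0 := ne_of_gt hε
  have hkℓ : ε * k - 1 = ε * ℓ := by rw [hℓ, mul_sub, mul_one_div_cancel hε0]
  have hel : |ε * ℓ| ≤ 1 := hkℓ ▸ hk
  have ha : T * (ε ^ 2)⁻¹ * (1 - ε ^ 2 * k ^ 2) ^ 2 = T * ℓ ^ 2 * (2 + ε * ℓ) ^ 2 := by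
    have : 1 - ε ^ 2 * k ^ 2 = -(ε * ℓ) * (2 + ε * ℓ) := by
      have h1 : ε * k = 1 + ε * ℓ := by linarith [hkℓ]
      have h2 : ε ^ 2 * k ^ 2 = (ε * k) ^ 2 := by ring
      rw [h2, h1]; ring
    rw [this]; field_simp
  rw [ha]
  have hel1 : -1 ≤ ε * ℓ := (abs_le.mp hel).1
  have hel2 : ε * ℓ ≤ 1 := (abs_le.mp hel).2
  have hc1 : T * ℓ ^ 2 ≤ T * ℓ ^ 2 * (2 + ε * ℓ) ^ 2 := by
    nlinarith [mul_nonneg (mul_nonneg hT (sq_nonneg ℓ))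
      (mul_nonneg (by linarith : (0:ℝ) ≤ 1 + ε * ℓ) (by linarith : (0:ℝ) ≤ 3 + ε * ℓ))]
  have hc2 : T * ℓ ^ 2 ≤ 4 * T * ℓ ^ 2 := by
    nlinarith [mul_nonneg hT (sq_nonneg ℓ)]
  have key := exp_diff_le (T * ℓ ^ 2 * (2 + ε * ℓ) ^ 2) (4 * T * ℓ ^ 2) (T * ℓ ^ 2) hc1 hc2
  refine key.trans ?_
  have hdiff : |T * ℓ ^ 2 * (2 + ε * ℓ) ^ 2 - 4 * T * ℓ ^ 2| ≤ 5 * ε * T * |ℓ| ^ 3 := by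
    have heq : T * ℓ ^ 2 * (2 + ε * ℓ) ^ 2 - 4 * T * ℓ ^ 2
        = T * ℓ ^ 2 * (ε * ℓ) * (4 + ε * ℓ) := by ring
    rw [heq, abs_mul, abs_mul, abs_mul, abs_of_nonneg hT, abs_mul,
      abs_of_nonneg hε.le, abs_of_nonneg (sq_nonneg ℓ), ← sq_abs ℓ]
    have h4 : |4 + ε * ℓ| ≤ 5 := by rw [abs_le]; constructor <;> linarith
    have : |ℓ| ^ 2 * |ℓ| = |ℓ| ^ 3 := by ring
    nlinarith [abs_nonneg ℓ, abs_nonneg (4 + ε * ℓ), mul_nonneg (mul_nonneg hT (sq_nonneg |ℓ|)) (mul_nonneg hε.le (abs_nonneg ℓ)), pow_nonneg (abs_nonneg ℓ) 3]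
  have hexp : (0:ℝ) < Real.exp (-(T * ℓ ^ 2)) := Real.exp_pos _
  calc |T * ℓ ^ 2 * (2 + ε * ℓ) ^ 2 - 4 * T * ℓ ^ 2| * Real.exp (-(T * ℓ ^ 2))
      ≤ 5 * ε * T * |ℓ| ^ 3 * Real.exp (-(T * ℓ ^ 2)) := by
        exact mul_le_mul_of_nonneg_right hdiff hexp.le
end
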